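/- Let (u_j)_{j≥1} be independent and identically distributed random variables with values in [0,1] and E[u_1] > 0. Then the infinite product P := ∏_{i=1}^∞ (1 − (1/2) ∏_{j=1}^{i−1} (1 − u_j)) (a decreasing limit of partial products, each factor lying in [1/2, 1]) converges almost surely to a strictly positive limit, and E[P] > 0. -/

import Mathlib

open MeasureTheory ProbabilityTheory Filter

/-- let `(u_j)_{j ≥ 0}` be i.i.d. `[0,1]`-valued random
variables with `E[u_0] > 0`.  Then the infinite product
`P = ∏_i (1 - ½ ∏_{j < i} (1 - u_j))` (the nonincreasing limit of its partial
products, each factor lying in `[1/2, 1]`) converges almost surely to a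
strictly positive limit, and `E[P] > 0`. -/
theorem stmt18 {Ω : Type*} [MeasureSpace Ω] [IsProbabilityMeasure (ℙ : Measure Ω)]
    (u : ℕ → Ω → ℝ) (hmeas : ∀ j, Measurable (u j))
    (hrange : ∀ j ω, u j ω ∈ Set.Icc (0 : ℝ) 1)
    (hindep : iIndepFun u ℙ)
    (hid : ∀ j, IdentDistrib (u j) (u 0) ℙ ℙ)
    (hpos : 0 < ∫ ω, u 0 ω) :
    (∀ᵐ ω ∂ℙ,
        Tendsto (fun m : ℕ =>
            ∏ i ∈ Finset.range m, (1 - 2⁻¹ * ∏ j ∈ Finset.range i, (1 - u j ω)))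
          atTop
          (nhds (⨅ m : ℕ,
            ∏ i ∈ Finset.range m, (1 - 2⁻¹ * ∏ j ∈ Finset.range i, (1 - u j ω)))) ∧
        0 < ⨅ m : ℕ,
          ∏ i ∈ Finset.range m, (1 - 2⁻¹ * ∏ j ∈ Finset.range i, (1 - u j ω))) ∧
      0 < ∫ ω, ⨅ m : ℕ,
        ∏ i ∈ Finset.range m, (1 - 2⁻¹ * ∏ j ∈ Finset.range i, (1 - u j ω)) := by
  -- notation
  set f : ℕ → Ω → ℝ := fun j ω => 1 - u j ω with hf
  have hfmeas : ∀ j, Measurable (f j) := fun j => measurable_const.sub (hmeas j)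
  have hf01 : ∀ j ω, f j ω ∈ Set.Icc (0 : ℝ) 1 := by
    intro j ω
    have := hrange j ω
    constructor <;> simp [hf] <;> [exact this.2; exact this.1]
  set V : ℕ → Ω → ℝ := fun i ω => ∏ j ∈ Finset.range i, (1 - u j ω) with hV
  have hVmeas : ∀ i, Measurable (V i) := by
    intro i
    exact Finset.measurable_prod _ fun j _ => hfmeas j
  have hV0 : ∀ i ω, 0 ≤ V i ω := fun i ω =>
    Finset.prod_nonneg fun j _ => (hf01 j ω).1
  have hV1 : ∀ i ω, V i ω ≤ 1 := fun i ω =>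
    Finset.prod_le_one (fun j _ => (hf01 j ω).1) (fun j _ => (hf01 j ω).2)
  have hVint : ∀ i, Integrable (V i) ℙ := by
    intro i
    refine Integrable.mono' (integrable_const 1) (hVmeas i).aestronglyMeasurable ?_
    exact Eventually.of_forall fun ω => by
      rw [Real.norm_eq_abs, abs_of_nonneg (hV0 i ω)]; exact hV1 i ω
  have huint : ∀ j, Integrable (u j) ℙ := by
    intro j
    refine Integrable.mono' (integrable_const 1) (hmeas j).aestronglyMeasurable ?_
    exact Eventually.of_forall fun ω => by
      rw [Real.norm_eq_abs, abs_of_nonneg (hrange j ω).1]; exact (hrange j ω).2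
  set μr : ℝ := ∫ ω, u 0 ω with hμr
  have hμr1 : μr ≤ 1 := by
    calc μr ≤ ∫ _ : Ω, (1 : ℝ) ∂ℙ :=
          integral_mono (huint 0) (integrable_const 1) fun ω => (hrange 0 ω).2
      _ = 1 := by simp
  -- independence of the f's
  have hfind : iIndepFun f ℙ :=
    hindep.comp (fun _ x => 1 - x) fun _ => measurable_const.sub measurable_id
  -- integral of V i
  have hVval : ∀ i, ∫ ω, V i ω = (1 - μr) ^ i := by
    intro i
    induction i with
    | zero => simp [hV]
    | succ n ih =>
      have hIF : IndepFun (∏ j ∈ Finset.range n, f j) (f n) ℙ :=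
        hfind.indepFun_prod_range_succ hfmeas n
      have hprodeq : (∏ j ∈ Finset.range n, f j) = V n := by
        funext ω; simp [hV, hf, Finset.prod_apply]
      have hfint : Integrable (f n) ℙ := (integrable_const 1).sub (huint n)
      have key : ∫ ω, ((∏ j ∈ Finset.range n, f j) * f n) ω
          = (∫ ω, (∏ j ∈ Finset.range n, f j) ω) * ∫ ω, f n ω := by
        rw [hIF.integral_mul_eq_mul_integral (by rw [hprodeq]; exact (hVint n).aestronglyMeasurable) hfint.aestronglyMeasurable]
      have hfn : ∫ ω, f n ω = 1 - μr := by
        simp only [hf]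
        rw [integral_sub (integrable_const 1) (huint n), (hid n).integral_eq]
        simp [hμr]
      have : ∫ ω, V (n + 1) ω = ∫ ω, ((∏ j ∈ Finset.range n, f j) * f n) ω := by
        congr 1; funext ω
        simp [hV, hf, Finset.prod_range_succ, Finset.prod_apply]
      rw [this, key, hprodeq, ih, hfn, pow_succ]
  -- a.e. summability of V
  have hr0 : 0 ≤ 1 - μr := by linarith
  have hr1 : 1 - μr < 1 := by linarith
  have hgeo : Summable fun i : ℕ => (1 - μr) ^ i := summable_geometric_of_lt_one hr0 hr1
  have hlint : ∫⁻ ω, ∑' i, ENNReal.ofReal (V i ω) ∂ℙ ≠ ⊤ := by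
    rw [lintegral_tsum fun i => ((hVmeas i).ennreal_ofReal).aemeasurable]
    have : ∀ i, ∫⁻ ω, ENNReal.ofReal (V i ω) ∂ℙ = ENNReal.ofReal ((1 - μr) ^ i) := by
      intro i
      rw [← ofReal_integral_eq_lintegral_ofReal (hVint i)
        (Eventually.of_forall fun ω => hV0 i ω), hVval i]
    rw [tsum_congr this, ← ENNReal.ofReal_tsum_of_nonneg (fun i => pow_nonneg hr0 i) hgeo]
    exact ENNReal.ofReal_ne_top
  have hsummable : ∀ᵐ ω ∂ℙ, Summable fun i => V i ω := by
    have hae := ae_lt_top (by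
      exact Measurable.ennreal_tsum fun i => (hVmeas i).ennreal_ofReal) hlint
    filter_upwards [hae] with ω hω
    have := ENNReal.summable_toReal hω.ne
    simpa [ENNReal.toReal_ofReal (hV0 _ ω)] using this
  -- the basic pointwise estimate : exp (-v) ≤ 1 - v/2 for v ∈ [0,1]
  have hkey : ∀ v : ℝ, 0 ≤ v → v ≤ 1 → Real.exp (-v) ≤ 1 - 2⁻¹ * v := by
    intro v h0 h1
    have h2 : (1 : ℝ) + v ≤ Real.exp v := by linarith [Real.add_one_le_exp v]
    have h3 : 0 < 1 + v := by linarith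
    have h4 : Real.exp (-v) ≤ (1 + v)⁻¹ := by
      rw [Real.exp_neg]
      exact inv_anti₀ h3 h2
    have h5 : (1 + v)⁻¹ ≤ 1 - 2⁻¹ * v := by
      rw [inv_le_iff_one_le_mul₀ h3]
      nlinarith
    linarith
  -- the a.e. statement
  have hmain : ∀ᵐ ω ∂ℙ,
      Tendsto (fun m : ℕ =>
          ∏ i ∈ Finset.range m, (1 - 2⁻¹ * ∏ j ∈ Finset.range i, (1 - u j ω)))
        atTop
        (nhds (⨅ m : ℕ,
          ∏ i ∈ Finset.range m, (1 - 2⁻¹ * ∏ j ∈ Finset.range i, (1 - u j ω)))) ∧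
      0 < ⨅ m : ℕ,
        ∏ i ∈ Finset.range m, (1 - 2⁻¹ * ∏ j ∈ Finset.range i, (1 - u j ω)) := by
    filter_upwards [hsummable] with ω hsum
    set Q : ℕ → ℝ := fun m => ∏ i ∈ Finset.range m, (1 - 2⁻¹ * V i ω) with hQ
    have hfac0 : ∀ i, 0 ≤ 1 - 2⁻¹ * V i ω := by
      intro i; have := hV1 i ω; have := hV0 i ω; nlinarith
    have hfac1 : ∀ i, 1 - 2⁻¹ * V i ω ≤ 1 := by
      intro i; have := hV0 i ω; nlinarith
    have hQ0 : ∀ m, 0 ≤ Q m := fun m => Finset.prod_nonneg fun i _ => hfac0 i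
    have hQanti : Antitone Q := by
      apply antitone_nat_of_succ_le
      intro m
      have hstep : Q (m + 1) = Q m * (1 - 2⁻¹ * V m ω) := Finset.prod_range_succ _ _
      rw [hstep]
      calc Q m * (1 - 2⁻¹ * V m ω) ≤ Q m * 1 :=
            mul_le_mul_of_nonneg_left (hfac1 m) (hQ0 m)
        _ = Q m := mul_one _
    set T : ℝ := ∑' i, V i ω with hT
    have hQlb : ∀ m, Real.exp (-T) ≤ Q m := by
      intro m
      have h1 : Real.exp (-(∑ i ∈ Finset.range m, V i ω)) ≤ Q m := by
        have he : Real.exp (-(∑ i ∈ Finset.range m, V i ω))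
            = ∏ i ∈ Finset.range m, Real.exp (-(V i ω)) := by
          rw [← Real.exp_sum]
          congr 1
          rw [← Finset.sum_neg_distrib]
        rw [he]
        exact Finset.prod_le_prod (fun i _ => (Real.exp_pos _).le)
          (fun i _ => by simpa using hkey (V i ω) (hV0 i ω) (hV1 i ω))
      have h2 : ∑ i ∈ Finset.range m, V i ω ≤ T :=
        Summable.sum_le_tsum _ (fun i _ => hV0 i ω) hsum
      calc Real.exp (-T) ≤ Real.exp (-(∑ i ∈ Finset.range m, V i ω)) := by
            apply Real.exp_le_exp.2; linarith
        _ ≤ Q m := h1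
    have hbdd : BddBelow (Set.range Q) := ⟨Real.exp (-T), by
      rintro x ⟨m, rfl⟩; exact hQlb m⟩
    constructor
    · exact tendsto_atTop_ciInf hQanti hbdd
    · exact lt_of_lt_of_le (Real.exp_pos _) (le_ciInf hQlb)
  refine ⟨hmain, ?_⟩
  -- positivity of the expectation
  set P : Ω → ℝ := fun ω => ⨅ m : ℕ,
      ∏ i ∈ Finset.range m, (1 - 2⁻¹ * ∏ j ∈ Finset.range i, (1 - u j ω)) with hP
  have hQmeas : ∀ m : ℕ, Measurable fun ω =>
      ∏ i ∈ Finset.range m, (1 - 2⁻¹ * ∏ j ∈ Finset.range i, (1 - u j ω)) := by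
    intro m
    exact Finset.measurable_prod _ fun i _ =>
      measurable_const.sub (measurable_const.mul (hVmeas i))
  have hPmeas : Measurable P := Measurable.iInf hQmeas
  have hfac0 : ∀ i ω, 0 ≤ 1 - 2⁻¹ * V i ω := by
    intro i ω; have := hV1 i ω; have := hV0 i ω; nlinarith
  have hP0 : ∀ ω, 0 ≤ P ω := by
    intro ω
    exact le_ciInf fun m => Finset.prod_nonneg fun i _ => hfac0 i ω
  have hP1 : ∀ ω, P ω ≤ 1 := by
    intro ω
    have hbb : BddBelow (Set.range fun m : ℕ =>
        ∏ i ∈ Finset.range m, (1 - 2⁻¹ * ∏ j ∈ Finset.range i, (1 - u j ω))) := by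
      refine ⟨0, ?_⟩
      rintro x ⟨m, rfl⟩
      exact Finset.prod_nonneg fun i _ => hfac0 i ω
    have : P ω ≤ ∏ i ∈ Finset.range 0, (1 - 2⁻¹ * ∏ j ∈ Finset.range i, (1 - u j ω)) :=
      ciInf_le hbb 0
    simpa using this
  have hPint : Integrable P ℙ := by
    refine Integrable.mono' (integrable_const 1) hPmeas.aestronglyMeasurable ?_
    exact Eventually.of_forall fun ω => by
      rw [Real.norm_eq_abs, abs_of_nonneg (hP0 ω)]; exact hP1 ω
  rw [integral_pos_iff_support_of_nonneg hP0 hPint]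
  have hsupp : ∀ᵐ ω ∂ℙ, ω ∈ Function.support P :=
    hmain.mono fun ω h => ne_of_gt h.2
  by_contra hc
  push_neg at hc
  have hzero : ℙ (Function.support P) = 0 := le_antisymm hc zero_le
  have : ∀ᵐ ω ∂ℙ, ω ∉ Function.support P := by
    rw [ae_iff]
    simpa [Function.support] using hzero
  have hcontr : ∀ᵐ ω : Ω ∂ℙ, False := by
    filter_upwards [hsupp, this] with ω h1 h2
    exact h2 h1
  rw [ae_iff] at hcontr
  simp at hcontr
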